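/- Let J ⊂ I ⊂ S_f be monomial ideals and t_1,…,t_r new variables. Then sdepth((I/J)[t_1^{±1},…,t_r^{±1}]) = sdepth(I/J) + r, where (I/J)[t_1^{±1},…,t_r^{±1}] is the extension of I/J to the Laurent polynomial extension S_f[t_1^{±1},…,t_r^{±1}]. -/

import Mathlib

/-!
Combinatorial model of the localized polynomial ring `S_f`, where
`S = K[x_1, …, x_n]`, `A ⊆ {1, …, n}` and `f = ∏_{j ∈ A} x_j`.

Since all the `ℤⁿ`-graded components of `S_f` are at most one-dimensional over `K`,
monomial `K`-subspaces of `S_f` (in particular monomial ideals, Stanley spaces and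
modules `I/J`) are faithfully encoded by their sets of exponent vectors `a : Fin n → ℤ`,
direct sum decompositions into monomial subspaces correspond exactly to partitions of
the exponent sets, and (for those sets `Z` considered here) `u·K[Z]` is automatically a
free `K[Z]`-module.
-/

/-- Exponent vectors of the monomials of `S_f`: all `a : ℤⁿ` with `a j ≥ 0` for `j ∉ A`. -/
def SfMon {n : ℕ} (A : Finset (Fin n)) : Set (Fin n → ℤ) :=
  {a | ∀ j, j ∉ A → 0 ≤ a j}

/-- `M` is the set of exponent vectors of the monomials of a monomial ideal of `S_f`
(for `A = ∅` this is a monomial ideal of the polynomial ring `S` itself). -/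
def IsMonomialIdeal {n : ℕ} (A : Finset (Fin n)) (M : Set (Fin n → ℤ)) : Prop :=
  M ⊆ SfMon A ∧ ∀ a ∈ M, ∀ c ∈ SfMon A, a + c ∈ M

/-- Admissible sets of "variables" for Stanley spaces in `S_f`: `(i, true)` stands for
`x i` and `(i, false)` for `x i⁻¹`; inverse variables exist only for `i ∈ A`, and
`{x i, x i⁻¹} ⊄ Z`. -/
def ZOk {n : ℕ} (A : Finset (Fin n)) (Z : Finset (Fin n × Bool)) : Prop :=
  (∀ i : Fin n, (i, false) ∈ Z → i ∈ A) ∧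
  ∀ i : Fin n, ¬((i, true) ∈ Z ∧ (i, false) ∈ Z)

/-- Exponent vectors of the monomials of the Stanley space `u·K[Z]`. -/
def stanleySet {n : ℕ} (u : Fin n → ℤ) (Z : Finset (Fin n × Bool)) : Set (Fin n → ℤ) :=
  {a | ∀ i : Fin n, ((i, true) ∈ Z → u i ≤ a i) ∧ ((i, false) ∈ Z → a i ≤ u i) ∧
      ((i, true) ∉ Z → (i, false) ∉ Z → a i = u i)}

/-- The family of Stanley spaces `u i · K[Z i]` is a Stanley decomposition of the
monomial `K`-vector space whose monomials have exponent vectors in `M`. -/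
def IsStanleyDecompOn {n : ℕ} (A : Finset (Fin n)) (M : Set (Fin n → ℤ)) {ι : Type}
    (u : ι → Fin n → ℤ) (Z : ι → Finset (Fin n × Bool)) : Prop :=
  Finite ι ∧ (∀ i, ZOk A (Z i)) ∧
  Pairwise (fun i j : ι => Disjoint (stanleySet (u i) (Z i)) (stanleySet (u j) (Z j))) ∧
  (⋃ i, stanleySet (u i) (Z i)) = M

/-- Stanley depth of the monomial `K`-space with exponent set `M` (value `⊤` for `M = ∅`). -/
noncomputable def sdepth {n : ℕ} (A : Finset (Fin n)) (M : Set (Fin n → ℤ)) : ℕ∞ :=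
  sSup {k : ℕ∞ | ∃ (r : ℕ) (u : Fin r → Fin n → ℤ) (Z : Fin r → Finset (Fin n × Bool)),
    IsStanleyDecompOn A M u Z ∧ ∀ i, k ≤ ((Z i).card : ℕ∞)}

/-- The exponent vector of `f = ∏_{j ∈ A} x_j`. -/
def fVec {n : ℕ} (A : Finset (Fin n)) : Fin n → ℤ := fun i => if i ∈ A then 1 else 0

/-- Localization at `f` of a monomial ideal (given by its set of exponent vectors). -/
def locSet {n : ℕ} (A : Finset (Fin n)) (M : Set (Fin n → ℤ)) : Set (Fin n → ℤ) :=
  {b ∈ SfMon A | ∃ k : ℕ, b + (k : ℤ) • fVec A ∈ M}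

/-- `|a| = Σ_i |a_i|`, the degree used for the Hilbert series. -/
def degAbs {n : ℕ} (a : Fin n → ℤ) : ℕ := ∑ i, (a i).natAbs

/-- The Hilbert series `H_M(t) = Σ_d H(M,d) t^d`, `H(M,d) = #{a ∈ M : |a| = d}`, of the
`ℤⁿ`-graded `K`-vector space with monomial exponent set `M`. -/
noncomputable def hilbSeries {n : ℕ} (M : Set (Fin n → ℤ)) : PowerSeries ℚ :=
  PowerSeries.mk fun d => (({a ∈ M | degAbs a = d}).ncard : ℚ)

/-- A prime filtration `J = N 0 ⊂ N 1 ⊂ … ⊂ N r = I` of `I/J` by monomial ideals of `S_f`,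
with `i`-th factor isomorphic, as a `ℤⁿ`-graded module, to `(S_f/P_{B i})(-a i)`, where
`P_B` is the monomial prime ideal generated by the variables `x j`, `j ∈ B`. -/
def IsPrimeFiltration {n : ℕ} (A : Finset (Fin n)) (J I : Set (Fin n → ℤ)) (r : ℕ)
    (N : Fin (r + 1) → Set (Fin n → ℤ)) (B : Fin r → Finset (Fin n))
    (a : Fin r → Fin n → ℤ) : Prop :=
  N 0 = J ∧ N (Fin.last r) = I ∧
  (∀ i : Fin (r + 1), IsMonomialIdeal A (N i)) ∧
  (∀ i : Fin r, N i.castSucc ⊂ N i.succ) ∧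
  (∀ i : Fin r, ∀ j ∈ A, j ∉ B i) ∧
  (∀ i : Fin r, ∀ j, 0 ≤ a i j) ∧
  (∀ i : Fin r, ∀ j ∈ A, a i j = 0) ∧
  (∀ i : Fin r, N i.succ \ N i.castSucc =
    {b | ∃ c ∈ SfMon A, (∀ j ∈ B i, c j = 0) ∧ b = a i + c})

/-- `fdepth` of `I/J` (value `⊤` for `I = J`); `dim S_f/P_B = n - |B|`. -/
noncomputable def fdepth {n : ℕ} (A : Finset (Fin n)) (J I : Set (Fin n → ℤ)) : ℕ∞ :=
  sSup {k : ℕ∞ | ∃ (r : ℕ) (N : Fin (r + 1) → Set (Fin n → ℤ)) (B : Fin r → Finset (Fin n))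
      (a : Fin r → Fin n → ℤ), IsPrimeFiltration A J I r N B a ∧
      ∀ i, k ≤ ((n - (B i).card : ℕ) : ℕ∞)}

/-- The set of exponent vectors of the monomials of the colon ideal `(J :_{S_f} I)`,
which is the annihilator of `I/J`. -/
def colonSet {n : ℕ} (A : Finset (Fin n)) (I J : Set (Fin n → ℤ)) : Set (Fin n → ℤ) :=
  {c ∈ SfMon A | ∀ a ∈ I, a + c ∈ J}

/-- The monomial prime `P_B·S_f` contains the monomial ideal with exponent set `Q`. -/
def primeContainsIdeal {n : ℕ} (B : Finset (Fin n)) (Q : Set (Fin n → ℤ)) : Prop :=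
  ∀ c ∈ Q, ∃ j ∈ B, 1 ≤ c j

/-- `P_B·S_f` is a minimal prime ideal of the module `I/J`, i.e. a prime of `S_f`
(so `B ∩ A = ∅`) minimal among those containing `ann(I/J) = (J : I)`. -/
def IsMinimalPrimeOf {n : ℕ} (A B : Finset (Fin n)) (I J : Set (Fin n → ℤ)) : Prop :=
  (∀ j ∈ A, j ∉ B) ∧ primeContainsIdeal B (colonSet A I J) ∧
  ∀ B' ⊆ B, primeContainsIdeal B' (colonSet A I J) → B' = B


/-! ### Auxiliary lemmas -/

namespace SLEaux

variable {n : ℕ}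

theorem dickson_nat (s : Set (Fin n → ℕ)) :
    ∃ G : Finset (Fin n → ℕ), ↑G ⊆ s ∧ ∀ a ∈ s, ∃ g ∈ G, ∀ j, g j ≤ a j := by
  classical
  set T : Set (Fin n → ℕ) := {a | a ∈ s ∧ ∀ b ∈ s, b ≤ a → b = a} with hT
  have hanti : IsAntichain (· ≤ ·) T := by
    intro a ha b hb hne hle
    exact hne (hb.2 a ha.1 hle)
  have hfin : T.Finite := by
    haveI : IsWellOrder ℕ (fun a b : ℕ => a < b) := by infer_instance
    exact hanti.finite_of_partiallyWellOrderedOn (Set.isPWO_of_wellQuasiOrderedLE T)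
  refine ⟨hfin.toFinset, by intro g hg; exact (hfin.mem_toFinset.mp hg).1, ?_⟩
  have key : ∀ N : ℕ, ∀ a ∈ s, (∑ j, a j) = N → ∃ g ∈ T, ∀ j, g j ≤ a j := by
    intro N
    induction N using Nat.strong_induction_on with
    | _ N ih =>
      intro a ha hsum
      by_cases hmin : ∀ b ∈ s, b ≤ a → b = a
      · exact ⟨a, ⟨ha, hmin⟩, fun j => le_refl _⟩
      · push_neg at hmin
        obtain ⟨b, hb, hble, hbne⟩ := hmin
        have hlt : (∑ j, b j) < N := by
          rw [← hsum]
          apply Finset.sum_lt_sum (fun j _ => hble j)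
          obtain ⟨j, hj⟩ := Function.ne_iff.mp hbne
          exact ⟨j, Finset.mem_univ j, lt_of_le_of_ne (hble j) hj⟩
        obtain ⟨g, hg, hgle⟩ := ih _ hlt b hb rfl
        exact ⟨g, hg, fun j => (hgle j).trans (hble j)⟩
  intro a ha
  obtain ⟨g, hg, hgle⟩ := key (∑ j, a j) a ha rfl
  exact ⟨g, hfin.mem_toFinset.mpr hg, hgle⟩

theorem ideal_criterion (A : Finset (Fin n)) (I : Set (Fin n → ℤ)) (hI : IsMonomialIdeal A I) :
    ∃ G : Finset (Fin n → ℕ), ∀ a ∈ SfMon A, (a ∈ I ↔ ∃ g ∈ G, ∀ j ∉ A, (g j : ℤ) ≤ a j) := by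
  classical
  obtain ⟨G, hGs, hGall⟩ := dickson_nat
    {g : Fin n → ℕ | (fun j => (g j : ℤ)) ∈ I ∧ ∀ j ∈ A, g j = 0}
  refine ⟨G, fun a ha => ⟨fun haI => ?_, fun ⟨g, hg, hgle⟩ => ?_⟩⟩
  · set abar : Fin n → ℕ := fun j => if j ∈ A then 0 else (a j).toNat with habar
    have hc : (fun j => (abar j : ℤ)) = a + fun j => ((abar j : ℤ) - a j) := by
      funext j; simp
    have hcmem : (fun j => ((abar j : ℤ) - a j)) ∈ SfMon A := by
      intro j hj
      simp only [habar, if_neg hj, Int.toNat_of_nonneg (ha j hj)]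
      omega
    have habarI : (fun j => (abar j : ℤ)) ∈ I := by
      rw [hc]; exact hI.2 a haI _ hcmem
    obtain ⟨g, hg, hgle⟩ := hGall abar ⟨habarI, fun j hj => by simp [habar, if_pos hj]⟩
    refine ⟨g, hg, fun j hj => ?_⟩
    calc (g j : ℤ) ≤ (abar j : ℤ) := by exact_mod_cast hgle j
      _ = a j := by simp [habar, if_neg hj, Int.toNat_of_nonneg (ha j hj)]
  · have hgI : (fun j => (g j : ℤ)) ∈ I := (hGs hg).1
    have : a = (fun j => (g j : ℤ)) + fun j => (a j - g j) := by funext j; simp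
    rw [this]
    refine hI.2 _ hgI _ (fun j hj => ?_)
    have := hgle j hj
    omega

end SLEaux

namespace SLEaux
variable {n : ℕ}

theorem exists_decomp (A : Finset (Fin n)) (I J : Set (Fin n → ℤ))
    (hI : IsMonomialIdeal A I) (hJ : IsMonomialIdeal A J) :
    ∃ (ι : Type) (_ : Finite ι) (u : ι → Fin n → ℤ) (Z : ι → Finset (Fin n × Bool)),
      IsStanleyDecompOn A (I \ J) u Z := by
  classical
  obtain ⟨GI, hGI⟩ := ideal_criterion A I hI
  obtain ⟨GJ, hGJ⟩ := ideal_criterion A J hJ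
  set d : ℤ := 1 + ((GI ∪ GJ).sup (fun g => Finset.univ.sup g) : ℕ) with hd
  have hd0 : 0 ≤ d := by positivity
  have hgd : ∀ g ∈ GI ∪ GJ, ∀ j, (g j : ℤ) < d := by
    intro g hg j
    have h1 : g j ≤ Finset.univ.sup g := Finset.le_sup (Finset.mem_univ j)
    have h2 : Finset.univ.sup g ≤ (GI ∪ GJ).sup (fun g => Finset.univ.sup g) :=
      Finset.le_sup hg
    have := h1.trans h2
    omega
  set clamp : (Fin n → ℤ) → (Fin n → ℤ) :=
    fun a j => if j ∈ A then (if 0 ≤ a j then 0 else -1) else min (a j) d with hclamp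
  -- clamp preserves SfMon
  have hclampS : ∀ a ∈ SfMon A, clamp a ∈ SfMon A := by
    intro a ha j hj
    simp only [hclamp, if_neg hj, le_min_iff]
    exact ⟨ha j hj, hd0⟩
  -- criterion invariance under clamp
  have hcrit : ∀ (G : Finset (Fin n → ℕ)), (∀ g ∈ G, g ∈ GI ∪ GJ) →
      ∀ a ∈ SfMon A, ((∃ g ∈ G, ∀ j ∉ A, (g j : ℤ) ≤ a j) ↔
        (∃ g ∈ G, ∀ j ∉ A, (g j : ℤ) ≤ clamp a j)) := by
    intro G hGsub a _
    constructor
    · rintro ⟨g, hg, hle⟩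
      refine ⟨g, hg, fun j hj => ?_⟩
      simp only [hclamp, if_neg hj, le_min_iff]
      exact ⟨hle j hj, (hgd g (hGsub g hg) j).le⟩
    · rintro ⟨g, hg, hle⟩
      refine ⟨g, hg, fun j hj => ?_⟩
      have := hle j hj
      simp only [hclamp, if_neg hj, le_min_iff] at this
      exact this.1
  have hclampI : ∀ a ∈ SfMon A, (a ∈ I ↔ clamp a ∈ I) := by
    intro a ha
    rw [hGI a ha, hGI (clamp a) (hclampS a ha)]
    exact hcrit GI (fun g hg => Finset.mem_union_left _ hg) a ha
  have hclampJ : ∀ a ∈ SfMon A, (a ∈ J ↔ clamp a ∈ J) := by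
    intro a ha
    rw [hGJ a ha, hGJ (clamp a) (hclampS a ha)]
    exact hcrit GJ (fun g hg => Finset.mem_union_right _ hg) a ha
  have hclampM : ∀ a ∈ SfMon A, (a ∈ I \ J ↔ clamp a ∈ I \ J) := by
    intro a ha
    rw [Set.mem_diff, Set.mem_diff, hclampI a ha, hclampJ a ha]
  -- idempotence-like property: clamp a determines the fibre
  set Zc : (Fin n → ℤ) → Finset (Fin n × Bool) := fun u =>
    Finset.univ.filter (fun p : Fin n × Bool =>
      if p.2 then (if p.1 ∈ A then u p.1 = 0 else u p.1 = d) else (p.1 ∈ A ∧ u p.1 = -1)) with hZc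
  have memZct : ∀ (u : Fin n → ℤ) (i : Fin n),
      ((i, true) ∈ Zc u ↔ (if i ∈ A then u i = 0 else u i = d)) := by
    intro u i; simp [hZc]
  have memZcf : ∀ (u : Fin n → ℤ) (i : Fin n),
      ((i, false) ∈ Zc u ↔ (i ∈ A ∧ u i = -1)) := by
    intro u i; simp [hZc]
  have hZOk : ∀ u, ZOk A (Zc u) := by
    intro u
    constructor
    · intro i hi; exact ((memZcf u i).mp hi).1
    · intro i ⟨ht, hf⟩
      rw [memZct] at ht; rw [memZcf] at hf
      rw [if_pos hf.1] at ht
      omega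
  set valid : (Fin n → ℤ) → Prop := fun u =>
    (∀ j ∈ A, u j = 0 ∨ u j = -1) ∧ (∀ j ∉ A, 0 ≤ u j ∧ u j ≤ d) with hvalid
  have hclampValid : ∀ a ∈ SfMon A, valid (clamp a) := by
    intro a ha
    constructor
    · intro j hj
      simp only [hclamp, if_pos hj]
      by_cases h : 0 ≤ a j <;> simp [h]
    · intro j hj
      simp only [hclamp, if_neg hj, le_min_iff, min_le_iff]
      exact ⟨⟨ha j hj, hd0⟩, Or.inr le_rfl⟩
  have hstanley : ∀ u, valid u →
      stanleySet u (Zc u) = {a | a ∈ SfMon A ∧ clamp a = u} := by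
    intro u hu
    ext a
    simp only [stanleySet, Set.mem_setOf_eq]
    constructor
    · intro h
      have hSf : a ∈ SfMon A := by
        intro j hj
        obtain ⟨h0, hdle⟩ := hu.2 j hj
        by_cases hjd : u j = d
        · have := (h j).1 ((memZct u j).mpr (by rw [if_neg hj]; exact hjd))
          omega
        · have heq := (h j).2.2 (by rw [memZct, if_neg hj]; exact hjd)
            (by rw [memZcf]; tauto)
          omega
      refine ⟨hSf, funext fun j => ?_⟩
      by_cases hj : j ∈ A
      · rcases hu.1 j hj with h0 | hm1
        · have := (h j).1 ((memZct u j).mpr (by rw [if_pos hj]; exact h0))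
          simp only [hclamp, if_pos hj, if_pos (by omega : (0:ℤ) ≤ a j)]
          omega
        · have := (h j).2.1 ((memZcf u j).mpr ⟨hj, hm1⟩)
          simp only [hclamp, if_pos hj, if_neg (by omega : ¬ (0:ℤ) ≤ a j)]
          omega
      · obtain ⟨h0, hdle⟩ := hu.2 j hj
        by_cases hjd : u j = d
        · have := (h j).1 ((memZct u j).mpr (by rw [if_neg hj]; exact hjd))
          simp only [hclamp, if_neg hj]
          omega
        · have heq := (h j).2.2 (by rw [memZct, if_neg hj]; exact hjd)
            (by rw [memZcf]; tauto)
          simp only [hclamp, if_neg hj]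
          omega
    · rintro ⟨hSf, hca⟩
      intro i
      refine ⟨?_, ?_, ?_⟩
      · intro ht
        rw [memZct] at ht
        by_cases hi : i ∈ A
        · rw [if_pos hi] at ht
          have := congrFun hca i
          simp only [hclamp, if_pos hi] at this
          by_cases h0 : 0 ≤ a i
          · rw [if_pos h0] at this; omega
          · rw [if_neg h0] at this; omega
        · rw [if_neg hi] at ht
          have := congrFun hca i
          simp only [hclamp, if_neg hi] at this
          have h0 := hSf i hi
          omega
      · intro hf
        rw [memZcf] at hf
        obtain ⟨hi, hm1⟩ := hf
        have := congrFun hca i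
        simp only [hclamp, if_pos hi] at this
        by_cases h0 : 0 ≤ a i
        · rw [if_pos h0] at this; omega
        · rw [if_neg h0] at this; omega
      · intro hnt hnf
        rw [memZct] at hnt; rw [memZcf] at hnf
        have := congrFun hca i
        by_cases hi : i ∈ A
        · rw [if_pos hi] at hnt
          simp only [hclamp, if_pos hi] at this
          rcases hu.1 i hi with h0 | hm1
          · exact absurd h0 hnt
          · exact absurd ⟨hi, hm1⟩ hnf
        · rw [if_neg hi] at hnt
          simp only [hclamp, if_neg hi] at this
          obtain ⟨h0, hdle⟩ := hu.2 i hi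
          have h0a := hSf i hi
          omega
  -- the index set
  set Im : Set (Fin n → ℤ) := clamp '' (I \ J) with hIm
  have hImFin : Im.Finite := by
    have hsub : Im ⊆ Set.pi Set.univ (fun _ : Fin n => Set.Icc (-1 : ℤ) d) := by
      rintro u ⟨a, haM, rfl⟩
      intro j _
      have ha : a ∈ SfMon A := hI.1 haM.1
      have hv := hclampValid a ha
      by_cases hj : j ∈ A
      · rcases hv.1 j hj with h | h <;> rw [h] <;> constructor <;> omega
      · obtain ⟨h1, h2⟩ := hv.2 j hj
        exact ⟨by omega, h2⟩
    exact (Set.Finite.pi (fun _ => Set.finite_Icc _ _)).subset hsub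
  haveI : Finite Im := hImFin.to_subtype
  refine ⟨Im, inferInstance, fun u => u.1, fun u => Zc u.1, ?_, ?_, ?_, ?_⟩
  · infer_instance
  · intro u; exact hZOk u.1
  · intro u v huv
    have hvu : valid u.1 := by
      obtain ⟨a, haM, hau⟩ := u.2
      rw [← hau]; exact hclampValid a (hI.1 haM.1)
    have hvv : valid v.1 := by
      obtain ⟨a, haM, hav⟩ := v.2
      rw [← hav]; exact hclampValid a (hI.1 haM.1)
    rw [Set.disjoint_left, hstanley _ hvu, hstanley _ hvv]
    rintro a ⟨_, h1⟩ ⟨_, h2⟩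
    exact huv (Subtype.ext (h1 ▸ h2))
  · ext a
    simp only [Set.mem_iUnion]
    constructor
    · rintro ⟨u, hu⟩
      have hvu : valid u.1 := by
        obtain ⟨b, hbM, hbu⟩ := u.2
        rw [← hbu]; exact hclampValid b (hI.1 hbM.1)
      rw [hstanley _ hvu] at hu
      obtain ⟨hSf, hca⟩ := hu
      obtain ⟨b, hbM, hbu⟩ := u.2
      rw [hclampM a hSf, hca, ← hbu, ← hclampM b (hI.1 hbM.1)]
      exact hbM
    · intro haM
      have hSf : a ∈ SfMon A := hI.1 haM.1
      refine ⟨⟨clamp a, a, haM, rfl⟩, ?_⟩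
      rw [hstanley _ (hclampValid a hSf)]
      exact ⟨hSf, rfl⟩

end SLEaux

namespace SLEaux
variable {n r : ℕ}

def sdSet {n : ℕ} (A : Finset (Fin n)) (M : Set (Fin n → ℤ)) : Set ℕ∞ :=
  {k : ℕ∞ | ∃ (r : ℕ) (u : Fin r → Fin n → ℤ) (Z : Fin r → Finset (Fin n × Bool)),
    IsStanleyDecompOn A M u Z ∧ ∀ i, k ≤ ((Z i).card : ℕ∞)}

theorem sdepth_eq_sSup (A : Finset (Fin n)) (M : Set (Fin n → ℤ)) :
    sdepth A M = sSup (sdSet A M) := rfl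

theorem mem_sdSet_of {A : Finset (Fin n)} {M : Set (Fin n → ℤ)} {ι : Type} [Finite ι]
    {u : ι → Fin n → ℤ} {Z : ι → Finset (Fin n × Bool)} {k : ℕ∞}
    (h : IsStanleyDecompOn A M u Z) (hk : ∀ i, k ≤ ((Z i).card : ℕ∞)) :
    k ∈ sdSet A M := by
  classical
  haveI := Fintype.ofFinite ι
  set e := Fintype.equivFin ι with he
  refine ⟨Fintype.card ι, u ∘ e.symm, Z ∘ e.symm,
    ⟨inferInstance, fun i => h.2.1 _, ?_, ?_⟩, fun i => hk _⟩
  · intro i j hij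
    exact h.2.2.1 (e.symm.injective.ne hij)
  · rw [← h.2.2.2]
    exact e.symm.surjective.iUnion_comp (fun i => stanleySet (u i) (Z i))

theorem finite_Iic_enat (N : ℕ) : (Set.Iic (N : ℕ∞)).Finite := by
  have hsub : Set.Iic (N : ℕ∞) ⊆ (fun k : ℕ => (k : ℕ∞)) '' Set.Iic N := by
    intro k hk
    lift k to ℕ using (lt_of_le_of_lt hk (WithTop.coe_lt_top N)).ne
    exact ⟨k, Set.mem_Iic.mpr (by exact_mod_cast Set.mem_Iic.mp hk), rfl⟩
  exact ((Set.finite_Iic N).image _).subset hsub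

theorem sdSet_mem_sSup {A : Finset (Fin n)} {M : Set (Fin n → ℤ)} (hM : M.Nonempty)
    (hne : (sdSet A M).Nonempty) : sSup (sdSet A M) ∈ sdSet A M := by
  refine hne.csSup_mem ((finite_Iic_enat (Fintype.card (Fin n × Bool))).subset ?_)
  rintro k ⟨s, u, Z, hD, hle⟩
  obtain ⟨a, ha⟩ := hM
  rw [← hD.2.2.2] at ha
  obtain ⟨i, hi⟩ := Set.mem_iUnion.mp ha
  exact (hle i).trans (Nat.cast_le.mpr (Finset.card_le_univ _))

theorem castAdd_ne_natAdd (i : Fin n) (k : Fin r) : Fin.castAdd r i ≠ Fin.natAdd n k := by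
  intro h
  have h2 := congrArg Fin.val h
  simp only [Fin.coe_castAdd, Fin.coe_natAdd] at h2
  have := i.isLt
  omega

theorem natAdd_inj {k k' : Fin r} (h : Fin.natAdd n k = Fin.natAdd n k') : k = k' := by
  have h2 := congrArg Fin.val h
  simp only [Fin.coe_natAdd] at h2
  exact Fin.ext (by omega)

theorem fin_cases_add (j : Fin (n + r)) :
    (∃ i : Fin n, j = Fin.castAdd r i) ∨ (∃ k : Fin r, j = Fin.natAdd n k) := by
  by_cases hlt : (j : ℕ) < n
  · exact Or.inl ⟨⟨(j : ℕ), hlt⟩, Fin.ext rfl⟩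
  · have hj := j.isLt
    refine Or.inr ⟨⟨(j : ℕ) - n, by omega⟩, Fin.ext ?_⟩
    simp only [Fin.coe_natAdd]
    omega

theorem mem_A'_castAdd (A : Finset (Fin n)) (i : Fin n) :
    Fin.castAdd r i ∈ A.image (Fin.castAdd r) ∪ Finset.univ.image (Fin.natAdd n) ↔ i ∈ A := by
  simp only [Finset.mem_union, Finset.mem_image, Finset.mem_univ, true_and]
  constructor
  · rintro (⟨j, hj, hji⟩ | ⟨k, hk⟩)
    · rwa [← Fin.castAdd_injective n r hji]
    · exact absurd hk.symm (castAdd_ne_natAdd i k)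
  · intro h; exact Or.inl ⟨i, h, rfl⟩

theorem mem_A'_natAdd (A : Finset (Fin n)) (k : Fin r) :
    Fin.natAdd n k ∈ A.image (Fin.castAdd r) ∪ Finset.univ.image (Fin.natAdd n) := by
  exact Finset.mem_union_right _ (Finset.mem_image.mpr ⟨k, Finset.mem_univ k, rfl⟩)

theorem pairmap_inj : Function.Injective (fun p : Fin n × Bool => (Fin.castAdd r p.1, p.2)) := by
  intro p q h
  simp only [Prod.mk.injEq] at h
  exact Prod.ext (Fin.castAdd_injective n r h.1) h.2

def res {n r : ℕ} (a : Fin (n + r) → ℤ) : Fin n → ℤ := fun j => a (Fin.castAdd r j)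

def extv {n r : ℕ} (a : Fin n → ℤ) : Fin (n + r) → ℤ := Fin.append a (fun _ => 0)

theorem res_extv (a : Fin n → ℤ) : res (extv (r := r) a) = a := by
  funext j; simp [res, extv]

noncomputable def resZ {n r : ℕ} (Z : Finset (Fin (n + r) × Bool)) : Finset (Fin n × Bool) :=
  Z.preimage (fun p : Fin n × Bool => (Fin.castAdd r p.1, p.2)) (pairmap_inj.injOn)

theorem mem_resZ {Z : Finset (Fin (n + r) × Bool)} {i : Fin n} {b : Bool} :
    (i, b) ∈ resZ Z ↔ (Fin.castAdd r i, b) ∈ Z := Finset.mem_preimage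

theorem card_le_resZ {Z : Finset (Fin (n + r) × Bool)}
    (hZ : ∀ i, ¬((i, true) ∈ Z ∧ (i, false) ∈ Z)) :
    Z.card ≤ (resZ (n := n) (r := r) Z).card + r := by
  classical
  have hsplit := Finset.card_filter_add_card_filter_not
    (s := Z) (p := fun p => (p.1 : ℕ) < n)
  have hC : Z.filter (fun p => (p.1 : ℕ) < n) =
      (resZ Z).image (fun p : Fin n × Bool => (Fin.castAdd r p.1, p.2)) := by
    ext p
    simp only [Finset.mem_filter, Finset.mem_image, mem_resZ]
    constructor
    · rintro ⟨hp, hlt⟩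
      refine ⟨(⟨(p.1 : ℕ), hlt⟩, p.2), ?_, ?_⟩
      · rw [mem_resZ]
        have h3 : Fin.castAdd r (⟨(p.1 : ℕ), hlt⟩ : Fin n) = p.1 := Fin.ext rfl
        rw [h3]
        simpa using hp
      · exact Prod.ext (Fin.ext rfl) rfl
    · rintro ⟨q, hq, rfl⟩
      exact ⟨mem_resZ.mp hq, by simp [Fin.coe_castAdd, (q.1).isLt]⟩
  have hCcard : (Z.filter (fun p => (p.1 : ℕ) < n)).card = (resZ Z).card := by
    rw [hC, Finset.card_image_of_injective _ pairmap_inj]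
  have hTcard : (Z.filter (fun p => ¬((p.1 : ℕ) < n))).card ≤ r := by
    set T := Z.filter (fun p => ¬((p.1 : ℕ) < n)) with hT
    have hinj : Set.InjOn Prod.fst (↑T : Set (Fin (n + r) × Bool)) := by
      rintro ⟨p1, pb⟩ hp ⟨q1, qb⟩ hq h
      simp only at h
      subst h
      have hpZ := (Finset.mem_filter.mp hp).1
      have hqZ := (Finset.mem_filter.mp hq).1
      cases pb <;> cases qb
      · rfl
      · exact absurd ⟨hqZ, hpZ⟩ (hZ p1)
      · exact absurd ⟨hpZ, hqZ⟩ (hZ p1)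
      · rfl
    have hsub : T.image Prod.fst ⊆ Finset.univ.image (Fin.natAdd n) := by
      intro j hj
      obtain ⟨p, hp, rfl⟩ := Finset.mem_image.mp hj
      have hnlt := (Finset.mem_filter.mp hp).2
      have hlt := (p.1).isLt
      refine Finset.mem_image.mpr ⟨⟨(p.1 : ℕ) - n, by omega⟩, Finset.mem_univ _, Fin.ext ?_⟩
      simp only [Fin.coe_natAdd]
      omega
    calc T.card = (T.image Prod.fst).card := (Finset.card_image_of_injOn hinj).symm
      _ ≤ (Finset.univ.image (Fin.natAdd n (m := r))).card := Finset.card_le_card hsub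
      _ ≤ (Finset.univ : Finset (Fin r)).card := Finset.card_image_le
      _ = r := by simp
  omega

def compat {n r : ℕ} (u : Fin (n + r) → ℤ) (Z : Finset (Fin (n + r) × Bool)) : Prop :=
  ∀ k : Fin r, ((Fin.natAdd n k, true) ∈ Z → u (Fin.natAdd n k) ≤ 0) ∧
    ((Fin.natAdd n k, false) ∈ Z → 0 ≤ u (Fin.natAdd n k)) ∧
    ((Fin.natAdd n k, true) ∉ Z → (Fin.natAdd n k, false) ∉ Z → (0 : ℤ) = u (Fin.natAdd n k))

theorem extv_mem_iff {u : Fin (n + r) → ℤ} {Z : Finset (Fin (n + r) × Bool)} {a : Fin n → ℤ} :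
    extv a ∈ stanleySet u Z ↔ compat u Z ∧ a ∈ stanleySet (res u) (resZ Z) := by
  simp only [stanleySet, Set.mem_setOf_eq]
  constructor
  · intro h
    refine ⟨fun k => ?_, fun i => ?_⟩
    · have hk := h (Fin.natAdd n k)
      simpa only [extv, Fin.append_right] using hk
    · have hi := h (Fin.castAdd r i)
      simp only [extv, Fin.append_left] at hi
      simp only [res, mem_resZ]
      exact hi
  · rintro ⟨hc, ha⟩ j
    obtain ⟨i, rfl⟩ | ⟨k, rfl⟩ := fin_cases_add j
    · have hi := ha i
      simp only [res, mem_resZ] at hi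
      simpa only [extv, Fin.append_left] using hi
    · have hk := hc k
      simpa only [extv, Fin.append_right] using hk

theorem ZOk_resZ {A : Finset (Fin n)} {Z : Finset (Fin (n + r) × Bool)}
    (h : ZOk (A.image (Fin.castAdd r) ∪ Finset.univ.image (Fin.natAdd n)) Z) :
    ZOk A (resZ Z) := by
  constructor
  · intro i hi
    exact (mem_A'_castAdd A i).mp (h.1 _ (mem_resZ.mp hi))
  · rintro i ⟨ht, hf⟩
    exact h.2 _ ⟨mem_resZ.mp ht, mem_resZ.mp hf⟩

def extZ {n r : ℕ} (Z : Finset (Fin n × Bool)) (S : Fin r → Bool) :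
    Finset (Fin (n + r) × Bool) :=
  Z.image (fun p : Fin n × Bool => (Fin.castAdd r p.1, p.2)) ∪
    Finset.univ.image (fun k : Fin r => (Fin.natAdd n k, S k))

theorem mem_extZ_cast {Z : Finset (Fin n × Bool)} {S : Fin r → Bool} (i : Fin n) (b : Bool) :
    (Fin.castAdd r i, b) ∈ extZ Z S ↔ (i, b) ∈ Z := by
  simp only [extZ, Finset.mem_union, Finset.mem_image, Finset.mem_univ, true_and]
  constructor
  · rintro (⟨p, hp, hpe⟩ | ⟨k, hk⟩)
    · obtain ⟨h1, h2⟩ := Prod.ext_iff.mp hpe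
      have h3 : p = (i, b) := Prod.ext (Fin.castAdd_injective n r h1) h2
      rwa [h3] at hp
    · exact absurd (Prod.ext_iff.mp hk).1.symm (castAdd_ne_natAdd i k)
  · intro h; exact Or.inl ⟨(i, b), h, rfl⟩

theorem mem_extZ_nat {Z : Finset (Fin n × Bool)} {S : Fin r → Bool} (k : Fin r) (b : Bool) :
    (Fin.natAdd n k, b) ∈ extZ Z S ↔ b = S k := by
  simp only [extZ, Finset.mem_union, Finset.mem_image, Finset.mem_univ, true_and]
  constructor
  · rintro (⟨p, hp, hpe⟩ | ⟨k', hk'⟩)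
    · exact absurd (Prod.ext_iff.mp hpe).1 (castAdd_ne_natAdd p.1 k)
    · obtain ⟨h1, h2⟩ := Prod.ext_iff.mp hk'
      simp only at h1 h2
      rw [← h2, natAdd_inj h1]
  · intro h; exact Or.inr ⟨k, Prod.ext rfl h.symm⟩

theorem card_extZ {Z : Finset (Fin n × Bool)} {S : Fin r → Bool} :
    (extZ Z S).card = Z.card + r := by
  classical
  rw [extZ, Finset.card_union_of_disjoint, Finset.card_image_of_injective _ pairmap_inj,
    Finset.card_image_of_injective, Finset.card_univ, Fintype.card_fin]
  · intro k k' h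
    simp only [Prod.mk.injEq] at h
    exact natAdd_inj h.1
  · rw [Finset.disjoint_left]
    rintro p hp hq
    obtain ⟨q, _, rfl⟩ := Finset.mem_image.mp hp
    obtain ⟨k, _, hk⟩ := Finset.mem_image.mp hq
    exact castAdd_ne_natAdd q.1 k (Prod.ext_iff.mp hk).1.symm

theorem ZOk_extZ {A : Finset (Fin n)} {Z : Finset (Fin n × Bool)} {S : Fin r → Bool}
    (h : ZOk A Z) :
    ZOk (A.image (Fin.castAdd r) ∪ Finset.univ.image (Fin.natAdd n)) (extZ Z S) := by
  constructor
  · intro j hj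
    rcases Finset.mem_union.mp hj with hl | hr
    · obtain ⟨⟨p1, p2⟩, hp, hpe⟩ := Finset.mem_image.mp hl
      obtain ⟨h1, h2⟩ := Prod.ext_iff.mp hpe
      simp only at h1 h2
      rw [← h1, mem_A'_castAdd]
      rw [h2] at hp
      exact h.1 p1 hp
    · obtain ⟨k, _, hke⟩ := Finset.mem_image.mp hr
      have h1 := (Prod.ext_iff.mp hke).1
      simp only at h1
      rw [← h1]
      exact mem_A'_natAdd A k
  · rintro j ⟨ht, hf⟩
    obtain ⟨i, rfl⟩ | ⟨k, rfl⟩ := fin_cases_add j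
    · rw [mem_extZ_cast] at ht hf
      exact h.2 i ⟨ht, hf⟩
    · rw [mem_extZ_nat] at ht hf
      rw [← hf] at ht
      exact Bool.noConfusion ht

def extU {n r : ℕ} (u : Fin n → ℤ) (S : Fin r → Bool) : Fin (n + r) → ℤ :=
  Fin.append u (fun k => if S k then 0 else -1)

theorem mem_ext_stanley_iff {u : Fin n → ℤ} {Z : Finset (Fin n × Bool)} {S : Fin r → Bool}
    {a : Fin (n + r) → ℤ} :
    a ∈ stanleySet (extU u S) (extZ Z S) ↔
      res a ∈ stanleySet u Z ∧
      ∀ k : Fin r, (S k = true → 0 ≤ a (Fin.natAdd n k)) ∧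
        (S k = false → a (Fin.natAdd n k) ≤ -1) := by
  simp only [stanleySet, Set.mem_setOf_eq]
  constructor
  · intro h
    refine ⟨fun i => ?_, fun k => ?_⟩
    · have hi := h (Fin.castAdd r i)
      simp only [mem_extZ_cast, extU, Fin.append_left] at hi
      exact hi
    · have hk := h (Fin.natAdd n k)
      simp only [mem_extZ_nat, extU, Fin.append_right] at hk
      constructor
      · intro hS
        have := hk.1 hS.symm
        rwa [if_pos hS] at this
      · intro hS
        have := hk.2.1 hS.symm
        rwa [if_neg (by simp [hS])] at this
  · rintro ⟨hres, hS⟩ j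
    obtain ⟨i, rfl⟩ | ⟨k, rfl⟩ := fin_cases_add j
    · have hi := hres i
      simp only [mem_extZ_cast, extU, Fin.append_left]
      exact hi
    · simp only [mem_extZ_nat, extU, Fin.append_right]
      have hk := hS k
      refine ⟨fun ht => ?_, fun hf => ?_, fun hnt hnf => ?_⟩
      · rw [if_pos ht.symm]
        exact hk.1 ht.symm
      · rw [if_neg (by simp [← hf])]
        exact hk.2 hf.symm
      · cases hSk : S k
        · exact absurd hSk.symm hnf
        · exact absurd hSk.symm hnt

end SLEaux

/-- For monomial ideals `J ⊂ I ⊂ S_f` and `r` new Laurent variables `t_1, …, t_r`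
(encoded as the last `r` indices of `Fin (n + r)`):
`sdepth (I/J)[t_1^{±1}, …, t_r^{±1}] = sdepth I/J + r`. -/
theorem sdepth_laurent_extension {n r : ℕ} (A : Finset (Fin n))
    (I J : Set (Fin n → ℤ))
    (hI : IsMonomialIdeal A I) (hJ : IsMonomialIdeal A J) (hJI : J ⊂ I) :
    sdepth (A.image (Fin.castAdd r) ∪ Finset.univ.image (Fin.natAdd n))
        {a : Fin (n + r) → ℤ | (fun i : Fin n => a (Fin.castAdd r i)) ∈ I \ J} =
      sdepth A (I \ J) + (r : ℕ∞) := by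
  classical
  have hMne : (I \ J).Nonempty := by
    obtain ⟨x, hxI, hxJ⟩ := Set.exists_of_ssubset hJI
    exact ⟨x, hxI, hxJ⟩
  obtain ⟨ι₀, hfι₀, u₀, Z₀, hD₀⟩ := SLEaux.exists_decomp A I J hI hJ
  have h0mem : (0 : ℕ∞) ∈ SLEaux.sdSet A (I \ J) := by
    haveI := hfι₀
    exact SLEaux.mem_sdSet_of hD₀ (fun i => zero_le)
  have hsdmem : sdepth A (I \ J) ∈ SLEaux.sdSet A (I \ J) :=
    SLEaux.sdSet_mem_sSup hMne ⟨0, h0mem⟩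
  set A' := A.image (Fin.castAdd r) ∪ Finset.univ.image (Fin.natAdd n) with hA'
  set M' : Set (Fin (n + r) → ℤ) :=
    {a : Fin (n + r) → ℤ | (fun i : Fin n => a (Fin.castAdd r i)) ∈ I \ J} with hM'
  have hMM' : ∀ a : Fin (n + r) → ℤ, a ∈ M' ↔ SLEaux.res a ∈ I \ J := fun a => Iff.rfl
  apply le_antisymm
  · rw [SLEaux.sdepth_eq_sSup A' M']
    apply sSup_le
    rintro k ⟨s, u', Z', hD, hkle⟩
    set C : Set (Fin s) := {i | SLEaux.compat (u' i) (Z' i)} with hC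
    have hkey : ∀ (a : Fin n → ℤ) (i : Fin s),
        SLEaux.extv a ∈ stanleySet (u' i) (Z' i) ↔
          SLEaux.compat (u' i) (Z' i) ∧
          a ∈ stanleySet (SLEaux.res (u' i)) (SLEaux.resZ (Z' i)) :=
      fun a i => SLEaux.extv_mem_iff
    have hresD : IsStanleyDecompOn A (I \ J)
        (fun i : C => SLEaux.res (u' i.1)) (fun i : C => SLEaux.resZ (Z' i.1)) := by
      refine ⟨inferInstance, fun i => SLEaux.ZOk_resZ (hD.2.1 i.1), ?_, ?_⟩
      · intro i j hij
        rw [Set.disjoint_left]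
        intro a hai haj
        have h1 := (hkey a i.1).mpr ⟨i.2, hai⟩
        have h2 := (hkey a j.1).mpr ⟨j.2, haj⟩
        have hne : i.1 ≠ j.1 := fun h => hij (Subtype.ext h)
        exact Set.disjoint_left.mp (hD.2.2.1 hne) h1 h2
      · ext a
        simp only [Set.mem_iUnion]
        constructor
        · rintro ⟨i, hai⟩
          have h1 := (hkey a i.1).mpr ⟨i.2, hai⟩
          have h2 : SLEaux.extv a ∈ M' := by
            rw [← hD.2.2.2]
            exact Set.mem_iUnion.mpr ⟨i.1, h1⟩
          rwa [hMM', SLEaux.res_extv] at h2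
        · intro haM
          have h2 : SLEaux.extv a ∈ M' := by
            rw [hMM', SLEaux.res_extv]; exact haM
          rw [← hD.2.2.2] at h2
          obtain ⟨i, hi⟩ := Set.mem_iUnion.mp h2
          obtain ⟨hcomp, hres⟩ := (hkey a i).mp hi
          exact ⟨⟨i, hcomp⟩, hres⟩
    have hCne : Nonempty C := by
      obtain ⟨a0, ha0⟩ := hMne
      have h2 : SLEaux.extv a0 ∈ M' := by
        rw [hMM', SLEaux.res_extv]; exact ha0
      rw [← hD.2.2.2] at h2
      obtain ⟨i, hi⟩ := Set.mem_iUnion.mp h2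
      exact ⟨⟨i, ((hkey a0 i).mp hi).1⟩⟩
    haveI : Fintype C := Fintype.ofFinite C
    obtain ⟨i0, _, hmin⟩ := Finset.exists_min_image (Finset.univ : Finset C)
      (fun i => (SLEaux.resZ (Z' i.1)).card) Finset.univ_nonempty
    have hc0mem : ((SLEaux.resZ (Z' i0.1)).card : ℕ∞) ∈ SLEaux.sdSet A (I \ J) :=
      SLEaux.mem_sdSet_of hresD (fun i => Nat.cast_le.mpr (hmin i (Finset.mem_univ i)))
    have hstep : k ≤ ((SLEaux.resZ (Z' i0.1)).card : ℕ∞) + r := by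
      refine (hkle i0.1).trans ?_
      have hcard := SLEaux.card_le_resZ (Z := Z' i0.1) ((hD.2.1 i0.1).2)
      calc ((Z' i0.1).card : ℕ∞) ≤ (((SLEaux.resZ (Z' i0.1)).card + r : ℕ) : ℕ∞) :=
            Nat.cast_le.mpr hcard
        _ = ((SLEaux.resZ (Z' i0.1)).card : ℕ∞) + r := by push_cast; rfl
    exact hstep.trans (add_le_add_left (le_sSup hc0mem) _)
  · obtain ⟨s, u, Z, hD, hle⟩ := hsdmem
    have hmem : sdepth A (I \ J) + (r : ℕ∞) ∈ SLEaux.sdSet A' M' := by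
      refine SLEaux.mem_sdSet_of (ι := Fin s × (Fin r → Bool))
        (u := fun p => SLEaux.extU (u p.1) p.2)
        (Z := fun p => SLEaux.extZ (Z p.1) p.2) ⟨inferInstance, ?_, ?_, ?_⟩ ?_
      · intro p
        exact SLEaux.ZOk_extZ (hD.2.1 p.1)
      · intro p q hpq
        rw [Set.disjoint_left]
        intro a hap haq
        obtain ⟨hres1, hS1⟩ := SLEaux.mem_ext_stanley_iff.mp hap
        obtain ⟨hres2, hS2⟩ := SLEaux.mem_ext_stanley_iff.mp haq
        by_cases h1 : p.1 = q.1
        · have h2 : p.2 ≠ q.2 := fun h => hpq (Prod.ext h1 h)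
          obtain ⟨k, hk⟩ := Function.ne_iff.mp h2
          revert hk
          cases hpk : p.2 k <;> cases hqk : q.2 k <;> intro hk
          · exact hk rfl
          · have ha1 := (hS1 k).2 hpk
            have ha2 := (hS2 k).1 hqk
            omega
          · have ha1 := (hS1 k).1 hpk
            have ha2 := (hS2 k).2 hqk
            omega
          · exact hk rfl
        · exact Set.disjoint_left.mp (hD.2.2.1 h1) hres1 hres2
      · ext a
        simp only [Set.mem_iUnion]
        constructor
        · rintro ⟨p, hp⟩
          have hres := (SLEaux.mem_ext_stanley_iff.mp hp).1
          rw [hMM']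
          rw [← hD.2.2.2]
          exact Set.mem_iUnion.mpr ⟨p.1, hres⟩
        · intro haM
          have hres : SLEaux.res a ∈ I \ J := (hMM' a).mp haM
          rw [← hD.2.2.2] at hres
          obtain ⟨i, hi⟩ := Set.mem_iUnion.mp hres
          refine ⟨(i, fun k => decide (0 ≤ a (Fin.natAdd n k))), ?_⟩
          refine SLEaux.mem_ext_stanley_iff.mpr ⟨hi, fun k => ⟨?_, ?_⟩⟩
          · intro ht
            exact of_decide_eq_true ht
          · intro hf
            have := of_decide_eq_false hf
            omega
      · intro p
        rw [SLEaux.card_extZ]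
        push_cast
        exact add_le_add_left (hle p.1) _
    exact le_sSup hmem
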